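/- Let L₁ and L₂ be first-order languages with no function or constant symbols (relational languages) with disjoint relation symbols, and let L = L₁ ⊕ L₂ be their sum. Let K₁ be a Fraïssé class of finite L₁-structures with the strong amalgamation property, and K₂ a Fraïssé class of finite L₂-structures with the strong amalgamation property. Let K be the class of all finite L-structures whose L₁-reduct lies in K₁ and whose L₂-reduct lies in K₂. Then K is a Fraïssé class and satisfies the strong amalgamation property. -/

import Mathlib

open FirstOrder FirstOrder.Language CategoryTheory

universe u₁ v₁ u₂ v₂ w

/-- The strong amalgamation property for a class of structures: amalgamation can be achieved
so that the images of the two structures intersect exactly in the image of the base. -/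
def StrongAmalgamation {L : FirstOrder.Language} (K : Set (Bundled L.Structure)) : Prop :=
  ∀ A ∈ K, ∀ B₁ ∈ K, ∀ B₂ ∈ K, ∀ (f₁ : A ↪[L] B₁) (f₂ : A ↪[L] B₂),
    ∃ C ∈ K, ∃ (g₁ : B₁ ↪[L] C) (g₂ : B₂ ↪[L] C),
      g₁.comp f₁ = g₂.comp f₂ ∧
      Set.range ⇑g₁ ∩ Set.range ⇑g₂ = Set.range ⇑(g₁.comp f₁)

/-- Given classes `K₁` of `L₁`-structures and `K₂` of `L₂`-structures, the class of finite
`(L₁ ⊕ L₂)`-structures whose `L₁`-reduct lies in `K₁` and whose `L₂`-reduct lies in `K₂`. -/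
def superpositionClass {L₁ : FirstOrder.Language.{u₁, v₁}} {L₂ : FirstOrder.Language.{u₂, v₂}}
    (K₁ : Set (Bundled.{w} L₁.Structure)) (K₂ : Set (Bundled.{w} L₂.Structure)) :
    Set (Bundled.{w} (L₁.sum L₂).Structure) :=
  {M | Finite M ∧
    (Bundled.mk M ((LHom.sumInl : L₁ →ᴸ L₁.sum L₂).reduct M) : Bundled L₁.Structure) ∈ K₁ ∧
    (Bundled.mk M ((LHom.sumInr : L₂ →ᴸ L₁.sum L₂).reduct M) : Bundled L₂.Structure) ∈ K₂}

namespace Stmt13Aux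

universe u v

section Relational

variable {L : FirstOrder.Language.{u, v}}

/-- Pull back a structure along a map, for a relational language. -/
def pullStr [L.IsRelational] {X Y : Type*} (sY : L.Structure Y) (f : X → Y) : L.Structure X where
  funMap := fun F _ => isEmptyElim F
  RelMap := fun r x => sY.RelMap r (f ∘ x)

/-- Constructor for embeddings over a relational language. -/
def mkEmb [L.IsRelational] {X Y : Type*} [L.Structure X] [L.Structure Y]
    (f : X → Y) (hinj : Function.Injective f)
    (hrel : ∀ {n} (r : L.Relations n) (x : Fin n → X),
      Structure.RelMap r (f ∘ x) ↔ Structure.RelMap r x) : X ↪[L] Y where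
  toFun := f
  inj' := hinj
  map_fun' := fun F _ => isEmptyElim F
  map_rel' := fun r x => hrel r x

@[simp] lemma mkEmb_coe [L.IsRelational] {X Y : Type*} [L.Structure X] [L.Structure Y]
    (f : X → Y) (hinj) (hrel) : ⇑(mkEmb (L := L) f hinj hrel) = f := rfl

/-- Constructor for equivalences over a relational language. -/
def mkEquiv [L.IsRelational] {X Y : Type*} [L.Structure X] [L.Structure Y]
    (f : X ≃ Y)
    (hrel : ∀ {n} (r : L.Relations n) (x : Fin n → X),
      Structure.RelMap r (⇑f ∘ x) ↔ Structure.RelMap r x) : X ≃[L] Y where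
  toEquiv := f
  map_fun' := fun F _ => isEmptyElim F
  map_rel' := fun r x => hrel r x

/-- A relational structure is determined by its relation maps. -/
lemma structure_eq [L.IsRelational] {X : Type*} (s t : L.Structure X)
    (h : ∀ n (r : L.Relations n) (x : Fin n → X), s.RelMap r x ↔ t.RelMap r x) : s = t := by
  obtain ⟨sf, sr⟩ := s
  obtain ⟨tf, tr⟩ := t
  congr 1
  · funext n F; exact isEmptyElim F
  · funext n r x; exact propext (h n r x)

/-- The structure on an empty type induced by a structure on `M`
(this fixes the values of nullary relations). -/
def emptyStr (L : FirstOrder.Language.{u, v}) [L.IsRelational] (E : Type*) [IsEmpty E]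
    (M : Type*) [L.Structure M] : L.Structure E where
  funMap := fun F _ => isEmptyElim F
  RelMap := fun {n} r x => Structure.RelMap (M := M) r (fun i => isEmptyElim (x i))

/-- The empty structure modelled on `M₀` embeds into any structure sharing an
extension with `M₀`. -/
noncomputable def emptyEmb [L.IsRelational] {E M₀ M Q : Type*} [IsEmpty E] [L.Structure M₀]
    [L.Structure M] [L.Structure Q] (e : M₀ ↪[L] Q) (e' : M ↪[L] Q) :
    @Embedding L E M (emptyStr L E M₀) _ :=
  letI : L.Structure E := emptyStr L E M₀
  mkEmb (fun x => isEmptyElim x) (fun a => isEmptyElim a) (fun {n} r x => by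
    cases n with
    | zero =>
      have h1 := e'.map_rel' r ((fun (a : E) => isEmptyElim a) ∘ x)
      have h2 := e.map_rel' r (fun i => isEmptyElim (x i) : Fin 0 → M₀)
      have h3 : e'.toFun ∘ ((fun (a : E) => isEmptyElim a) ∘ x) =
          e.toFun ∘ (fun i => isEmptyElim (x i) : Fin 0 → M₀) := funext fun i => i.elim0
      show Structure.RelMap r ((fun (a : E) => (isEmptyElim a : M)) ∘ x) ↔
        Structure.RelMap (M := M₀) r (fun i => isEmptyElim (x i))
      exact h1.symm.trans ((iff_of_eq
        (congrArg (fun y => Structure.RelMap (M := Q) r y) h3)).trans h2)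
    | succ m => exact isEmptyElim (x 0))

end Relational

section Sum

variable {L₁ : FirstOrder.Language.{u₁, v₁}} {L₂ : FirstOrder.Language.{u₂, v₂}}

/-- The `L₁`-reduct of an `(L₁ ⊕ L₂)`-embedding. -/
def reductEmb₁ {X Y : Type*} [(L₁.sum L₂).Structure X] [(L₁.sum L₂).Structure Y]
    (f : X ↪[L₁.sum L₂] Y) :
    @Embedding L₁ X Y ((LHom.sumInl : L₁ →ᴸ L₁.sum L₂).reduct X)
      ((LHom.sumInl : L₁ →ᴸ L₁.sum L₂).reduct Y) :=
  letI := (LHom.sumInl : L₁ →ᴸ L₁.sum L₂).reduct X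
  letI := (LHom.sumInl : L₁ →ᴸ L₁.sum L₂).reduct Y
  { toFun := f
    inj' := f.injective
    map_fun' := fun F x => f.map_fun' (Sum.inl F) x
    map_rel' := fun r x => f.map_rel' (Sum.inl r) x }

def reductEmb₂ {X Y : Type*} [(L₁.sum L₂).Structure X] [(L₁.sum L₂).Structure Y]
    (f : X ↪[L₁.sum L₂] Y) :
    @Embedding L₂ X Y ((LHom.sumInr : L₂ →ᴸ L₁.sum L₂).reduct X)
      ((LHom.sumInr : L₂ →ᴸ L₁.sum L₂).reduct Y) :=
  letI := (LHom.sumInr : L₂ →ᴸ L₁.sum L₂).reduct X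
  letI := (LHom.sumInr : L₂ →ᴸ L₁.sum L₂).reduct Y
  { toFun := f
    inj' := f.injective
    map_fun' := fun F x => f.map_fun' (Sum.inr F) x
    map_rel' := fun r x => f.map_rel' (Sum.inr r) x }

def reductEquiv₁ {X Y : Type*} [(L₁.sum L₂).Structure X] [(L₁.sum L₂).Structure Y]
    (f : X ≃[L₁.sum L₂] Y) :
    @Language.Equiv L₁ X Y ((LHom.sumInl : L₁ →ᴸ L₁.sum L₂).reduct X)
      ((LHom.sumInl : L₁ →ᴸ L₁.sum L₂).reduct Y) :=
  letI := (LHom.sumInl : L₁ →ᴸ L₁.sum L₂).reduct X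
  letI := (LHom.sumInl : L₁ →ᴸ L₁.sum L₂).reduct Y
  { toEquiv := f.toEquiv
    map_fun' := fun F x => f.map_fun' (Sum.inl F) x
    map_rel' := fun r x => f.map_rel' (Sum.inl r) x }

def reductEquiv₂ {X Y : Type*} [(L₁.sum L₂).Structure X] [(L₁.sum L₂).Structure Y]
    (f : X ≃[L₁.sum L₂] Y) :
    @Language.Equiv L₂ X Y ((LHom.sumInr : L₂ →ᴸ L₁.sum L₂).reduct X)
      ((LHom.sumInr : L₂ →ᴸ L₁.sum L₂).reduct Y) :=
  letI := (LHom.sumInr : L₂ →ᴸ L₁.sum L₂).reduct X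
  letI := (LHom.sumInr : L₂ →ᴸ L₁.sum L₂).reduct Y
  { toEquiv := f.toEquiv
    map_fun' := fun F x => f.map_fun' (Sum.inr F) x
    map_rel' := fun r x => f.map_rel' (Sum.inr r) x }

/-- Assembling an `(L₁ ⊕ L₂)`-embedding from the two reduct conditions. -/
def mkSumEmb [L₁.IsRelational] [L₂.IsRelational] {X Y : Type*}
    [(L₁.sum L₂).Structure X] [(L₁.sum L₂).Structure Y]
    (f : X → Y) (hinj : Function.Injective f)
    (h1 : ∀ {n} (r : L₁.Relations n) (x : Fin n → X),
      Structure.RelMap (L := L₁.sum L₂) (M := Y) (Sum.inl r) (f ∘ x) ↔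
        Structure.RelMap (L := L₁.sum L₂) (M := X) (Sum.inl r) x)
    (h2 : ∀ {n} (r : L₂.Relations n) (x : Fin n → X),
      Structure.RelMap (L := L₁.sum L₂) (M := Y) (Sum.inr r) (f ∘ x) ↔
        Structure.RelMap (L := L₁.sum L₂) (M := X) (Sum.inr r) x) : X ↪[L₁.sum L₂] Y :=
  mkEmb f hinj (fun {n} r x => by
    cases r with
    | inl r => exact h1 r x
    | inr r => exact h2 r x)

@[simp] lemma mkSumEmb_coe [L₁.IsRelational] [L₂.IsRelational] {X Y : Type*}
    [(L₁.sum L₂).Structure X] [(L₁.sum L₂).Structure Y] (f : X → Y) (hinj) (h1) (h2) :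
    ⇑(mkSumEmb (L₁ := L₁) (L₂ := L₂) f hinj h1 h2) = f := rfl

/-- A structure over a sum of relational languages is determined by its reducts. -/
lemma sum_structure_eq [L₁.IsRelational] [L₂.IsRelational] {X : Type*}
    (s t : (L₁.sum L₂).Structure X)
    (h1 : @LHom.reduct L₁ (L₁.sum L₂) LHom.sumInl X s = @LHom.reduct L₁ _ LHom.sumInl X t)
    (h2 : @LHom.reduct L₂ (L₁.sum L₂) LHom.sumInr X s = @LHom.reduct L₂ _ LHom.sumInr X t) :
    s = t := by
  obtain ⟨sf, sr⟩ := s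
  obtain ⟨tf, tr⟩ := t
  congr 1
  · funext n F; exact isEmptyElim F
  · funext n r x
    cases r with
    | inl r => exact congrFun (congrFun (congrFun (congrArg (fun (z : L₁.Structure X) =>
        @Structure.RelMap L₁ X z) h1) n) r) x
    | inr r => exact congrFun (congrFun (congrFun (congrArg (fun (z : L₂.Structure X) =>
        @Structure.RelMap L₂ X z) h2) n) r) x

end Sum

section Push

attribute [local instance] Classical.propDecidable

/-- The underlying set of the free amalgam of `B₁` and `B₂` over `A`. -/
def pushSet {A B₂ : Type*} (f₂ : A → B₂) (B₁ : Type*) : Type _ :=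
  B₁ ⊕ {b : B₂ // b ∉ Set.range f₂}

/-- The canonical inclusion of `B₂` into the free amalgam. -/
noncomputable def pushInr {A B₁ B₂ : Type*} (f₁ : A → B₁) (f₂ : A → B₂) :
    B₂ → pushSet f₂ B₁ := fun b =>
  if h : b ∈ Set.range f₂ then Sum.inl (f₁ h.choose) else Sum.inr ⟨b, h⟩

/-- The map from the free amalgam to a common extension. -/
def pushMap {A B₁ B₂ C : Type*} (f₂ : A → B₂) (u₁ : B₁ → C) (u₂ : B₂ → C) :
    pushSet f₂ B₁ → C :=
  Sum.elim u₁ (fun b => u₂ b.1)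

variable {A B₁ B₂ C : Type*} {f₁ : A → B₁} {f₂ : A → B₂} {u₁ : B₁ → C} {u₂ : B₂ → C}

lemma pushInr_f₂ (hf₂ : Function.Injective f₂) (a : A) :
    pushInr f₁ f₂ (f₂ a) = Sum.inl (f₁ a) := by
  have h : f₂ a ∈ Set.range f₂ := ⟨a, rfl⟩
  rw [show pushInr f₁ f₂ (f₂ a) = Sum.inl (f₁ h.choose) from dif_pos h]
  congr 1
  exact congrArg f₁ (hf₂ h.choose_spec)

lemma pushMap_inl (b : B₁) : pushMap f₂ u₁ u₂ (Sum.inl b) = u₁ b := rfl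

lemma pushMap_pushInr (hsq : u₁ ∘ f₁ = u₂ ∘ f₂) (b : B₂) :
    pushMap f₂ u₁ u₂ (pushInr f₁ f₂ b) = u₂ b := by
  by_cases h : b ∈ Set.range f₂
  · rw [show pushInr f₁ f₂ b = Sum.inl (f₁ h.choose) from dif_pos h]
    simp only [pushMap, Sum.elim_inl]
    have := congrFun hsq h.choose
    simp only [Function.comp_apply] at this
    rw [this, h.choose_spec]
  · rw [show pushInr f₁ f₂ b = Sum.inr ⟨b, h⟩ from dif_neg h]; rfl

lemma pushMap_injective (h₁ : Function.Injective u₁) (h₂ : Function.Injective u₂)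
    (hint : ∀ b₁ b₂, u₁ b₁ = u₂ b₂ → ∃ a, b₂ = f₂ a) :
    Function.Injective (pushMap f₂ u₁ u₂ : pushSet f₂ B₁ → C) := by
  rintro (b | b) (b' | b') h
  · exact congrArg Sum.inl (h₁ h)
  · obtain ⟨a, ha⟩ := hint b b'.1 h
    exact absurd ⟨a, ha.symm⟩ b'.2
  · obtain ⟨a, ha⟩ := hint b' b.1 h.symm
    exact absurd ⟨a, ha.symm⟩ b.2
  · exact congrArg Sum.inr (Subtype.ext (h₂ h))

lemma pushInr_injective (h : Function.Injective (pushMap f₂ u₁ u₂ : pushSet f₂ B₁ → C))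
    (hsq : u₁ ∘ f₁ = u₂ ∘ f₂) (h₂ : Function.Injective u₂) :
    Function.Injective (pushInr f₁ f₂ : B₂ → pushSet f₂ B₁) := by
  intro b b' hb
  apply h₂
  rw [← pushMap_pushInr (u₁ := u₁) hsq b, ← pushMap_pushInr (u₁ := u₁) hsq b', hb]

lemma range_inter_sub (hf₂ : Function.Injective f₂) :
    Set.range (Sum.inl : B₁ → pushSet f₂ B₁) ∩ Set.range (pushInr f₁ f₂) ⊆
      Set.range (fun a => (Sum.inl (f₁ a) : pushSet f₂ B₁)) := by
  rintro x ⟨⟨b, rfl⟩, ⟨b', hb'⟩⟩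
  by_cases h : b' ∈ Set.range f₂
  · obtain ⟨a, rfl⟩ := h
    exact ⟨a, by rw [← hb', pushInr_f₂ hf₂]⟩
  · rw [show pushInr f₁ f₂ b' = Sum.inr ⟨b', h⟩ from dif_neg h] at hb'
    exact absurd hb' (by simp)

end Push


section Countable

lemma countable_structures {L : FirstOrder.Language.{u,v}} [L.IsRelational]
    {K : Set (Bundled.{w} L.Structure)}
    (hc : (Quotient.mk' '' K).Countable) (hfin : ∀ A ∈ K, Finite A)
    (X : Type w) [Finite X] :
    {s : L.Structure X | Bundled.mk X s ∈ K}.Countable := by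
  have hsub : {s : L.Structure X | Bundled.mk X s ∈ K} ⊆
      ⋃ q ∈ Quotient.mk' '' K,
        {s : L.Structure X | Quotient.mk' (Bundled.mk X s) = q} := by
    intro s hs
    exact Set.mem_biUnion ⟨_, hs, rfl⟩ rfl
  refine Set.Countable.mono hsub (Set.Countable.biUnion hc ?_)
  rintro q ⟨N, hN, rfl⟩
  haveI : Finite ↥N := hfin N hN
  apply Set.Finite.countable
  have hne : ∀ s : L.Structure X, Quotient.mk' (Bundled.mk X s) = Quotient.mk' N →
      Nonempty (@Language.Equiv L X ↥N s N.str) := by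
    intro s hs
    exact Quotient.eq'.mp hs
  have : Finite ↥{s : L.Structure X | Quotient.mk' (Bundled.mk X s) = Quotient.mk' N} := by
    set P := {s : L.Structure X | Quotient.mk' (Bundled.mk X s) = Quotient.mk' N} with hP
    have hch : ∀ s : ↥P, Nonempty (@Language.Equiv L X ↥N s.1 N.str) := fun s => hne s.1 s.2
    have e : ∀ s : ↥P, @Language.Equiv L X ↥N s.1 N.str := fun s => (hch s).some
    have hinj : Function.Injective
        (fun s : ↥P => ((@Language.Equiv.toEquiv L X ↥N s.1 N.str (e s)) : X → ↥N)) := by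
      intro s s' hss
      apply Subtype.ext
      apply structure_eq
      intro n r x
      have h1 := (@Language.Equiv.map_rel' L X ↥N s.1 N.str (e s) n r x).symm
      have h2 := @Language.Equiv.map_rel' L X ↥N s'.1 N.str (e s') n r x
      have h3 : (@Language.Equiv.toEquiv L X ↥N s.1 N.str (e s)).toFun ∘ x
          = (@Language.Equiv.toEquiv L X ↥N s'.1 N.str (e s')).toFun ∘ x :=
        funext fun i => congrFun hss (x i)
      exact (h1.trans (iff_of_eq
        (congrArg (fun y => Structure.RelMap (M := ↥N) r y) h3))).trans h2
    exact Finite.of_injective _ hinj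
  exact Set.toFinite _


end Countable


section Main

variable {L₁ : FirstOrder.Language.{u₁, v₁}} {L₂ : FirstOrder.Language.{u₂, v₂}}
  [L₁.IsRelational] [L₂.IsRelational]
  {K₁ : Set (Bundled.{w} L₁.Structure)} {K₂ : Set (Bundled.{w} L₂.Structure)}

theorem superposition_SA (hH₁ : Hereditary K₁) (hH₂ : Hereditary K₂)
    (hSA₁ : StrongAmalgamation K₁) (hSA₂ : StrongAmalgamation K₂) :
    StrongAmalgamation (superpositionClass K₁ K₂) := by
  intro A hA B₁ hB₁ B₂ hB₂ f₁ f₂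
  obtain ⟨hAfin, hA1, hA2⟩ := hA
  obtain ⟨hB₁fin, hB₁1, hB₁2⟩ := hB₁
  obtain ⟨hB₂fin, hB₂1, hB₂2⟩ := hB₂
  obtain ⟨C1, hC1, g11, g21, hc1, hr1⟩ :=
    hSA₁ _ hA1 _ hB₁1 _ hB₂1 (reductEmb₁ f₁) (reductEmb₁ f₂)
  obtain ⟨C2, hC2, g12, g22, hc2, hr2⟩ :=
    hSA₂ _ hA2 _ hB₁2 _ hB₂2 (reductEmb₂ f₁) (reductEmb₂ f₂)
  have hsq1 : ⇑g11 ∘ ⇑f₁ = ⇑g21 ∘ ⇑f₂ := funext fun a => by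
    have := DFunLike.congr_fun hc1 a
    simp only [Embedding.comp_apply] at this
    exact this
  have hsq2 : ⇑g12 ∘ ⇑f₁ = ⇑g22 ∘ ⇑f₂ := funext fun a => by
    have := DFunLike.congr_fun hc2 a
    simp only [Embedding.comp_apply] at this
    exact this
  have hint1 : ∀ (b₁ : ↥B₁) (b₂ : ↥B₂), g11 b₁ = g21 b₂ → ∃ a, b₂ = ⇑f₂ a := by
    intro b₁ b₂ hb
    have hmem : g21 b₂ ∈ Set.range ⇑g11 ∩ Set.range ⇑g21 := ⟨⟨b₁, hb⟩, ⟨b₂, rfl⟩⟩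
    rw [hr1] at hmem
    obtain ⟨a, ha⟩ := hmem
    refine ⟨a, (g21.injective ?_).symm⟩
    calc ⇑g21 (f₂ a) = ⇑g11 (f₁ a) := (congrFun hsq1 a).symm
      _ = g21 b₂ := ha
  have hint2 : ∀ (b₁ : ↥B₁) (b₂ : ↥B₂), g12 b₁ = g22 b₂ → ∃ a, b₂ = ⇑f₂ a := by
    intro b₁ b₂ hb
    have hmem : g22 b₂ ∈ Set.range ⇑g12 ∩ Set.range ⇑g22 := ⟨⟨b₁, hb⟩, ⟨b₂, rfl⟩⟩
    rw [hr2] at hmem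
    obtain ⟨a, ha⟩ := hmem
    refine ⟨a, (g22.injective ?_).symm⟩
    calc ⇑g22 (f₂ a) = ⇑g12 (f₁ a) := (congrFun hsq2 a).symm
      _ = g22 b₂ := ha
  set D := pushSet (⇑f₂) ↥B₁ with hD
  set u : D → ↥C1 := pushMap (⇑f₂) ⇑g11 ⇑g21 with hu'
  set v : D → ↥C2 := pushMap (⇑f₂) ⇑g12 ⇑g22 with hv'
  have hu : Function.Injective u := pushMap_injective g11.injective g21.injective hint1
  have hv : Function.Injective v := pushMap_injective g12.injective g22.injective hint2
  letI sD1 : L₁.Structure D := pullStr C1.str u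
  letI sD2 : L₂.Structure D := pullStr C2.str v
  letI sD : (L₁.sum L₂).Structure D := inferInstance
  haveI : Finite ↥B₁ := hB₁fin
  haveI : Finite ↥B₂ := hB₂fin
  haveI hDfin : Finite D := by
    rw [hD]; unfold pushSet; infer_instance
  have hmem1 : (Bundled.mk D sD1 : Bundled L₁.Structure) ∈ K₁ := by
    refine hH₁ C1 hC1 ⟨Structure.FG.of_finite, ⟨?_⟩⟩
    exact @mkEmb L₁ _ D ↥C1 sD1 C1.str u hu (fun {n} r x => Iff.rfl)
  have hmem2 : (Bundled.mk D sD2 : Bundled L₂.Structure) ∈ K₂ := by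
    refine hH₂ C2 hC2 ⟨Structure.FG.of_finite, ⟨?_⟩⟩
    exact @mkEmb L₂ _ D ↥C2 sD2 C2.str v hv (fun {n} r x => Iff.rfl)
  have hpm : u ∘ pushInr ⇑f₁ ⇑f₂ = ⇑g21 := funext fun b => pushMap_pushInr hsq1 b
  have hpm2 : v ∘ pushInr ⇑f₁ ⇑f₂ = ⇑g22 := funext fun b => pushMap_pushInr hsq2 b
  have hι₂inj : Function.Injective (pushInr ⇑f₁ ⇑f₂ : ↥B₂ → D) :=
    pushInr_injective hu hsq1 g21.injective
  refine ⟨⟨D, sD⟩, ⟨hDfin, hmem1, hmem2⟩, ?_⟩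
  let ι₁ : B₁ ↪[L₁.sum L₂] (⟨D, sD⟩ : Bundled (L₁.sum L₂).Structure) :=
    mkSumEmb Sum.inl Sum.inl_injective
      (fun {n} r x => g11.map_rel' r x)
      (fun {n} r x => g12.map_rel' r x)
  let ι₂ : B₂ ↪[L₁.sum L₂] (⟨D, sD⟩ : Bundled (L₁.sum L₂).Structure) :=
    mkSumEmb (pushInr ⇑f₁ ⇑f₂) hι₂inj
      (fun {n} r x => by
        show Structure.RelMap (M := ↥C1) r (u ∘ (pushInr ⇑f₁ ⇑f₂ ∘ x)) ↔ _
        have hcx : u ∘ (pushInr ⇑f₁ ⇑f₂ ∘ x) = ⇑g21 ∘ x :=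
          funext fun i => congrFun hpm (x i)
        rw [hcx]
        exact g21.map_rel' r x)
      (fun {n} r x => by
        show Structure.RelMap (M := ↥C2) r (v ∘ (pushInr ⇑f₁ ⇑f₂ ∘ x)) ↔ _
        have hcx : v ∘ (pushInr ⇑f₁ ⇑f₂ ∘ x) = ⇑g22 ∘ x :=
          funext fun i => congrFun hpm2 (x i)
        rw [hcx]
        exact g22.map_rel' r x)
  refine ⟨ι₁, ι₂, ?_, ?_⟩
  · apply DFunLike.ext
    intro a
    show Sum.inl (f₁ a) = pushInr ⇑f₁ ⇑f₂ (f₂ a)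
    exact (pushInr_f₂ f₂.injective a).symm
  · apply subset_antisymm
    · intro x hx
      obtain ⟨a, ha⟩ := range_inter_sub (f₁ := ⇑f₁) f₂.injective hx
      exact ⟨a, ha⟩
    · rintro x ⟨a, rfl⟩
      refine ⟨⟨f₁ a, rfl⟩, ⟨f₂ a, ?_⟩⟩
      show pushInr ⇑f₁ ⇑f₂ (f₂ a) = Sum.inl (f₁ a)
      exact pushInr_f₂ f₂.injective a


theorem superposition_hereditary (hH₁ : Hereditary K₁) (hH₂ : Hereditary K₂) :
    Hereditary (superpositionClass K₁ K₂) := by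
  intro M hM N hN
  obtain ⟨hNFG, ⟨f⟩⟩ := hN
  haveI : Finite ↥M := hM.1
  haveI hNfin : Finite ↥N := by
    have h2 : Finite (⊤ : (L₁.sum L₂).Substructure ↥N) := Substructure.FG.finite hNFG.out
    exact Finite.of_equiv _ (@Substructure.topEquiv (L₁.sum L₂) ↥N _).toEquiv
  refine ⟨hNfin, ?_, ?_⟩
  · exact hH₁ _ hM.2.1 ⟨Structure.FG.of_finite, ⟨reductEmb₁ f⟩⟩
  · exact hH₂ _ hM.2.2 ⟨Structure.FG.of_finite, ⟨reductEmb₂ f⟩⟩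

theorem superposition_mem_of_equiv
    (hK₁inv : ∀ M N : Bundled.{w} L₁.Structure, Nonempty (M ≃[L₁] N) → (M ∈ K₁ ↔ N ∈ K₁))
    (hK₂inv : ∀ M N : Bundled.{w} L₂.Structure, Nonempty (M ≃[L₂] N) → (M ∈ K₂ ↔ N ∈ K₂))
    {M N : Bundled.{w} (L₁.sum L₂).Structure} (e : M ≃[L₁.sum L₂] N)
    (hM : M ∈ superpositionClass K₁ K₂) : N ∈ superpositionClass K₁ K₂ := by
  haveI : Finite ↥M := hM.1
  refine ⟨Finite.of_equiv _ e.toEquiv, ?_, ?_⟩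
  · exact (hK₁inv _ _ ⟨reductEquiv₁ e⟩).mp hM.2.1
  · exact (hK₂inv _ _ ⟨reductEquiv₂ e⟩).mp hM.2.2

theorem superposition_nonempty_embed (hK₁ : IsFraisse K₁) (hK₂ : IsFraisse K₂) :
    ∃ E ∈ superpositionClass K₁ K₂,
      ∀ M ∈ superpositionClass K₁ K₂, Nonempty (E ↪[L₁.sum L₂] M) := by
  obtain ⟨M₁, hM₁⟩ := hK₁.is_nonempty
  obtain ⟨M₂, hM₂⟩ := hK₂.is_nonempty
  letI s1 : L₁.Structure PEmpty.{w + 1} := emptyStr L₁ PEmpty.{w + 1} ↥M₁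
  letI s2 : L₂.Structure PEmpty.{w + 1} := emptyStr L₂ PEmpty.{w + 1} ↥M₂
  letI sE : (L₁.sum L₂).Structure PEmpty.{w + 1} := inferInstance
  have hE : (⟨PEmpty.{w + 1}, sE⟩ : Bundled (L₁.sum L₂).Structure) ∈
      superpositionClass K₁ K₂ := by
    refine ⟨inferInstance, ?_, ?_⟩
    · exact hK₁.hereditary M₁ hM₁ ⟨Structure.FG.of_finite,
        ⟨emptyEmb (Embedding.refl L₁ ↥M₁) (Embedding.refl L₁ ↥M₁)⟩⟩
    · exact hK₂.hereditary M₂ hM₂ ⟨Structure.FG.of_finite,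
        ⟨emptyEmb (Embedding.refl L₂ ↥M₂) (Embedding.refl L₂ ↥M₂)⟩⟩
  refine ⟨_, hE, ?_⟩
  intro M hM
  obtain ⟨Q₁, hQ₁, ⟨e₁⟩, ⟨e₁'⟩⟩ := hK₁.jointEmbedding M₁ hM₁ _ hM.2.1
  obtain ⟨Q₂, hQ₂, ⟨e₂⟩, ⟨e₂'⟩⟩ := hK₂.jointEmbedding M₂ hM₂ _ hM.2.2
  refine ⟨mkSumEmb (fun x => isEmptyElim x) (fun a => isEmptyElim a) ?_ ?_⟩
  · intro n r x
    exact (emptyEmb e₁ e₁').map_rel' r x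
  · intro n r x
    exact (emptyEmb e₂ e₂').map_rel' r x

theorem superposition_countable (hK₁ : IsFraisse K₁) (hK₂ : IsFraisse K₂)
    (hfin₁ : ∀ A ∈ K₁, Finite A) (hfin₂ : ∀ A ∈ K₂, Finite A) :
    (Quotient.mk' '' superpositionClass K₁ K₂).Countable := by
  have hS1 : ∀ n : ℕ,
      {s : L₁.Structure (ULift.{w} (Fin n)) | Bundled.mk _ s ∈ K₁}.Countable :=
    fun n => countable_structures hK₁.is_essentially_countable hfin₁ _
  have hS2 : ∀ n : ℕ,
      {s : L₂.Structure (ULift.{w} (Fin n)) | Bundled.mk _ s ∈ K₂}.Countable :=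
    fun n => countable_structures hK₂.is_essentially_countable hfin₂ _
  have hSn : ∀ n : ℕ, {s : (L₁.sum L₂).Structure (ULift.{w} (Fin n)) |
      Bundled.mk _ s ∈ superpositionClass K₁ K₂}.Countable := by
    intro n
    have hg : Function.Injective (fun s : (L₁.sum L₂).Structure (ULift.{w} (Fin n)) =>
        ((@LHom.reduct L₁ _ LHom.sumInl _ s, @LHom.reduct L₂ _ LHom.sumInr _ s) :
          L₁.Structure (ULift.{w} (Fin n)) × L₂.Structure (ULift.{w} (Fin n)))) := by
      intro s t h
      exact sum_structure_eq s t (congrArg Prod.fst h) (congrArg Prod.snd h)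
    refine Set.Countable.mono ?_ (((hS1 n).prod (hS2 n)).preimage hg)
    intro s hs
    exact Set.mem_preimage.mpr (Set.mem_prod.mpr ⟨hs.2.1, hs.2.2⟩)
  have hsub : Quotient.mk' '' superpositionClass K₁ K₂ ⊆
      ⋃ n : ℕ, (fun s : (L₁.sum L₂).Structure (ULift.{w} (Fin n)) =>
        Quotient.mk' (Bundled.mk _ s)) ''
          {s : (L₁.sum L₂).Structure (ULift.{w} (Fin n)) |
            Bundled.mk _ s ∈ superpositionClass K₁ K₂} := by
    rintro q ⟨M, hM, rfl⟩
    haveI : Finite ↥M := hM.1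
    obtain ⟨n, ⟨en⟩⟩ := Finite.exists_equiv_fin ↥M
    let e : ↥M ≃ ULift.{w} (Fin n) := en.trans Equiv.ulift.symm
    letI s : (L₁.sum L₂).Structure (ULift.{w} (Fin n)) := pullStr M.str e.symm
    have he : M ≃[L₁.sum L₂] (Bundled.mk (ULift.{w} (Fin n)) s) := by
      refine mkEquiv e ?_
      intro m r x
      show Structure.RelMap (M := ↥M) r (⇑e.symm ∘ (⇑e ∘ x)) ↔ Structure.RelMap (M := ↥M) r x
      have hco : ⇑e.symm ∘ (⇑e ∘ x) = x := funext fun i => e.symm_apply_apply (x i)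
      rw [hco]
    have hmem : Bundled.mk (ULift.{w} (Fin n)) s ∈ superpositionClass K₁ K₂ := by
      refine ⟨inferInstance, ?_, ?_⟩
      · exact (hK₁.is_equiv_invariant ⟨reductEquiv₁ he⟩).mp hM.2.1
      · exact (hK₂.is_equiv_invariant ⟨reductEquiv₂ he⟩).mp hM.2.2
    refine Set.mem_iUnion.mpr ⟨n, ⟨s, hmem, ?_⟩⟩
    exact Quotient.sound' ⟨he.symm⟩
  exact Set.Countable.mono hsub
    (Set.countable_iUnion fun n => Set.Countable.image (hSn n) _)

end Main

end Stmt13Aux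

/-- If `K₁` and `K₂` are Fraïssé classes of finite structures over disjoint
relational languages, each with the strong amalgamation property, then the class of finite
structures over the sum language whose reducts lie in `K₁` and `K₂` respectively is again a
Fraïssé class with the strong amalgamation property. -/
theorem stmt13 {L₁ : FirstOrder.Language.{u₁, v₁}} {L₂ : FirstOrder.Language.{u₂, v₂}}
    [L₁.IsRelational] [L₂.IsRelational]
    (K₁ : Set (Bundled.{w} L₁.Structure)) (K₂ : Set (Bundled.{w} L₂.Structure))
    (hK₁ : IsFraisse K₁) (hfin₁ : ∀ A ∈ K₁, Finite A) (hSA₁ : StrongAmalgamation K₁)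
    (hK₂ : IsFraisse K₂) (hfin₂ : ∀ A ∈ K₂, Finite A) (hSA₂ : StrongAmalgamation K₂) :
    IsFraisse (superpositionClass K₁ K₂) ∧
    StrongAmalgamation (superpositionClass K₁ K₂) := by
  have hH : Hereditary (superpositionClass K₁ K₂) :=
    Stmt13Aux.superposition_hereditary hK₁.hereditary hK₂.hereditary
  have hSA : StrongAmalgamation (superpositionClass K₁ K₂) :=
    Stmt13Aux.superposition_SA hK₁.hereditary hK₂.hereditary hSA₁ hSA₂
  have hAmalg : Amalgamation (superpositionClass K₁ K₂) := by
    intro M N P MN MP hM hN hP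
    obtain ⟨Q, hQ, g₁, g₂, hcomm, _⟩ := hSA M hM N hN P hP MN MP
    exact ⟨Q, g₁, g₂, hQ, hcomm⟩
  obtain ⟨E, hE, hEemb⟩ := Stmt13Aux.superposition_nonempty_embed hK₁ hK₂
  have hJEP : JointEmbedding (superpositionClass K₁ K₂) := by
    intro M hM N hN
    obtain ⟨eM⟩ := hEemb M hM
    obtain ⟨eN⟩ := hEemb N hN
    obtain ⟨Q, hQ, g₁, g₂, _, _⟩ := hSA E hE M hM N hN eM eN
    exact ⟨Q, hQ, ⟨g₁⟩, ⟨g₂⟩⟩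
  refine ⟨⟨⟨E, hE⟩, ?_,
    Stmt13Aux.superposition_countable hK₁ hK₂ hfin₁ hfin₂, hH, hJEP, hAmalg⟩, hSA⟩
  · intro M hM
    haveI : Finite ↥M := hM.1
    exact Structure.FG.of_finite
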